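/- Let S and I be DFAs over a finite alphabet A, let C ⊆ A* be a state cover for I (a finite set containing the empty word such that every state of I is reached from its initial state by some word in C), and let W ⊆ A* be a characterization set for S (a finite set containing the empty word such that any two states of S agreeing on all words of W accept the same language). Assume S is minimal (distinct states accept distinct languages). If S and I accept the same words within the set T = C · A^{≤1} · W (concatenation of languages), then S and I are language-equivalent. -/
import Mathlib


/-- Completeness of the test suite `C · A^{≤1} · W` for DFAs
(generalization of Lemma `agreets-equiv-dfa`). -/
theorem stmt_0 {A Q₁ Q₂ : Type} [Fintype A] [Fintype Q₁] [Fintype Q₂]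
    (δS : Q₁ → A → Q₁) (sS : Q₁) (FS : Set Q₁)
    (δI : Q₂ → A → Q₂) (sI : Q₂) (FI : Set Q₂)
    (C W : Set (List A)) (hCfin : C.Finite) (hWfin : W.Finite)
    (hCε : ([] : List A) ∈ C) (hWε : ([] : List A) ∈ W)
    -- C is a state cover for I
    (hCcover : ∀ q : Q₂, ∃ w ∈ C, List.foldl δI sI w = q)
    -- W is a characterization set for S
    (hWchar : ∀ p q : Q₁,
      (∀ w ∈ W, (List.foldl δS p w ∈ FS ↔ List.foldl δS q w ∈ FS)) →
      ∀ v : List A, (List.foldl δS p v ∈ FS ↔ List.foldl δS q v ∈ FS))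
    -- S is minimal
    (hmin : ∀ p q : Q₁,
      (∀ v : List A, (List.foldl δS p v ∈ FS ↔ List.foldl δS q v ∈ FS)) → p = q)
    -- S and I agree on T = C · A^{≤1} · W
    (hagree : ∀ x ∈ C, ∀ u : List A, u.length ≤ 1 → ∀ w ∈ W,
      (List.foldl δS sS (x ++ u ++ w) ∈ FS ↔ List.foldl δI sI (x ++ u ++ w) ∈ FI)) :
    ∀ v : List A, (List.foldl δS sS v ∈ FS ↔ List.foldl δI sI v ∈ FI) := by
  classical
  -- choose a cover word for each state of I
  choose c hcC hc using hCcover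
  -- the induced map from states of I to states of S
  set g : Q₂ → Q₁ := fun q => List.foldl δS sS (c q) with hg
  -- key: any short extension of a cover word lands on the matching S-state
  have key : ∀ x ∈ C, ∀ u : List A, u.length ≤ 1 →
      List.foldl δS sS (x ++ u) = g (List.foldl δI sI (x ++ u)) := by
    intro x hx u hu
    set q := List.foldl δI sI (x ++ u) with hq
    apply hmin
    apply hWchar
    intro w hw
    have h1 : List.foldl δS (List.foldl δS sS (x ++ u)) w ∈ FS ↔
        List.foldl δI q w ∈ FI := by
      have := hagree x hx u hu w hw
      simpa [List.foldl_append, hq] using this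
    have h2 : List.foldl δS (g q) w ∈ FS ↔ List.foldl δI q w ∈ FI := by
      have := hagree (c q) (hcC q) [] (by simp) w hw
      simpa [List.foldl_append, hg, hc q] using this
    rw [h1, h2]
  -- main invariant by induction on v
  have main : ∀ (v : List A) (q : Q₂),
      (List.foldl δS (g q) v ∈ FS ↔ List.foldl δI q v ∈ FI) := by
    intro v
    induction v with
    | nil =>
      intro q
      have := hagree (c q) (hcC q) [] (by simp) [] hWε
      simpa [List.foldl_append, hg, hc q] using this
    | cons a v ih =>
      intro q
      have hstep : δS (g q) a = g (δI q a) := by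
        have := key (c q) (hcC q) [a] (by simp)
        simpa [List.foldl_append, hg, hc q] using this
      simpa [hstep] using ih (δI q a)
  intro v
  have hs : g sI = sS := by
    have h := key [] hCε [] (by simp)
    simp only [List.append_nil, List.foldl_nil] at h
    exact h.symm
  have := main v sI
  rwa [hs] at this
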